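/- Let G be a finite group, let Σ̃_G be a transversal of the conjugacy classes of subgroups of G, and set e := Σ_{U ∈ Σ̃_G} [U,id_U,U]⁺_{G×G} ∈ ℚA(G,G). Then e ·_G a = a = a ·_G e for every element a of the subspace ℚA(G,G)^{G×G} of G×G-fixed elements. In particular, the ℤ-span B̃(G,G) of the orbit sums [U,α,V]⁺_{G×G} is a ring (a ℤ-order in the ℚ-algebra ℚA(G,G)^{G×G}) with identity element e. -/

import Mathlib

open scoped Classical

/-- The set `E_{G,H}` of triples `(U,α,V)` with `V ≤ H`, `U ≤ G` and
`α : V → U` a surjective homomorphism, encoded as pairs of a subgroup `V ≤ H`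
and a homomorphism `α : ↥V →* G` (so that `U = α.range`). -/
abbrev TriE (G H : Type*) [Group G] [Group H] := (V : Subgroup H) × (↥V →* G)

/-- The graph subgroup `⊲(U,α,V) = {(α v, v) : v ∈ V} ≤ G × H` of a triple.
Triples are `G × H`-conjugate iff their graphs are conjugate. -/
def lhdOf {G H : Type*} [Group G] [Group H] (t : TriE G H) : Subgroup (G × H) :=
  (t.2.prod t.1.subtype).range

/-- The ghost-algebra product `ℚA(G,H) × ℚA(H,K) → ℚA(G,K)`, given on basis
elements by `(U,α,V)·(V',β,W) = 0` if `V ≠ V'` and by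
`(|C_H(V)|/|H|)·(U,α∘β,W)` if `V = V'`; elements of `ℚA` are represented by
their coefficient functions on the basis `TriE`. -/
noncomputable def ghostMul {G H K : Type*} [Group G] [Group H] [Group K]
    (a : TriE G H → ℚ) (b : TriE H K → ℚ) : TriE G K → ℚ :=
  fun r => ∑ᶠ (s : TriE G H), ∑ᶠ (t : TriE H K),
    if h : t.2.range = s.1 then
      (if r = ⟨t.1, s.2.comp (t.2.codRestrict s.1
            (fun w => h ▸ MonoidHom.mem_range.mpr ⟨w, rfl⟩))⟩ then
        ((Nat.card ↥(Subgroup.centralizer ((s.1 : Subgroup H) : Set H)) : ℚ) /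
          (Nat.card H : ℚ)) * a s * b t
      else 0)
    else 0

/-- The orbit sum `[U,α,V]⁺` (sum of the `G × H`-conjugates of the basis
element `(U,α,V)`), as a coefficient function: the indicator function of the
conjugation orbit of the triple `t`, detected via graphs. -/
noncomputable def orbSum {G H : Type*} [Group G] [Group H] (t : TriE G H) :
    TriE G H → ℚ :=
  fun s => if ∃ a : G × H,
    Subgroup.map (MulAut.conj a).toMonoidHom (lhdOf t) = lhdOf s then 1 else 0

namespace Stmt10Aux

instance {G H : Type*} [Group G] [Group H] [Finite G] [Finite H] : Finite (G →* H) :=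
  Finite.of_injective (fun f => (f : G → H)) (fun f g h => by ext x; exact congrFun h x)

variable {G H : Type*} [Group G] [Group H]

theorem TriE.ext {s s' : TriE G H} (h1 : s.1 = s'.1)
    (h2 : ∀ v (hv : v ∈ s.1), s.2 ⟨v, hv⟩ = s'.2 ⟨v, h1 ▸ hv⟩) : s = s' := by
  obtain ⟨V, f⟩ := s
  obtain ⟨V', f'⟩ := s'
  cases h1
  simp only [Sigma.mk.inj_iff, heq_eq_eq, true_and]
  ext v
  exact h2 v v.2

theorem TriE.apply_eq {s s' : TriE G H} (h : s = s') (hfst : s.1 = s'.1) :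
    ∀ v (hv : v ∈ s.1), s.2 ⟨v, hv⟩ = s'.2 ⟨v, hfst ▸ hv⟩ := by
  cases h; intro v hv; rfl

theorem lhd_snd (t : TriE G H) : (lhdOf t).map (MonoidHom.snd G H) = t.1 := by
  rw [lhdOf, ← MonoidHom.range_comp]
  have : (MonoidHom.snd G H).comp (t.2.prod t.1.subtype) = t.1.subtype := rfl
  rw [this, Subgroup.range_subtype]

theorem lhd_map_conj (x : G × H) (t : TriE G H) :
    Subgroup.map (MulAut.conj x).toMonoidHom (lhdOf t) =
      ((((MulAut.conj x.1).toMonoidHom.comp t.2)).prod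
        (((MulAut.conj x.2).toMonoidHom.comp t.1.subtype))).range := by
  rw [lhdOf, ← MonoidHom.range_comp]
  congr 1

theorem conj_map_snd {x : G × H} {t s : TriE G H}
    (hx : Subgroup.map (MulAut.conj x).toMonoidHom (lhdOf t) = lhdOf s) :
    Subgroup.map (MulAut.conj x.2).toMonoidHom t.1 = s.1 := by
  have key : (MonoidHom.snd G H).comp (MulAut.conj x).toMonoidHom
      = ((MulAut.conj x.2).toMonoidHom).comp (MonoidHom.snd G H) := rfl
  calc Subgroup.map (MulAut.conj x.2).toMonoidHom t.1
      = Subgroup.map (MulAut.conj x.2).toMonoidHom ((lhdOf t).map (MonoidHom.snd G H)) := by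
        rw [lhd_snd]
    _ = Subgroup.map (MonoidHom.snd G H) (Subgroup.map (MulAut.conj x).toMonoidHom (lhdOf t)) := by
        rw [Subgroup.map_map, Subgroup.map_map, key]
    _ = s.1 := by rw [hx, lhd_snd]

theorem orb_diag_exists {G : Type*} [Group G] (U V : Subgroup G) (k h : G)
    (hh : Subgroup.map (MulAut.conj h).toMonoidHom U = V) :
    ∃ x : G × G, Subgroup.map (MulAut.conj x).toMonoidHom (lhdOf (⟨U, U.subtype⟩ : TriE G G))
      = lhdOf (⟨V, (MulAut.conj k).toMonoidHom.comp V.subtype⟩ : TriE G G) := by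
  refine ⟨(k * h, h), ?_⟩
  rw [lhd_map_conj, lhdOf]
  apply le_antisymm
  · rintro ⟨g, w⟩ ⟨u, hu⟩
    simp only [MonoidHom.prod_apply, MonoidHom.coe_comp, Function.comp_apply,
      MulEquiv.coe_toMonoidHom, MulAut.conj_apply, Subgroup.coe_subtype, Prod.mk.injEq] at hu
    have hw : w ∈ V := by
      rw [← hh]
      exact Subgroup.mem_map.mpr ⟨u, u.2, hu.2⟩
    refine ⟨⟨w, hw⟩, ?_⟩
    simp only [MonoidHom.prod_apply, MonoidHom.coe_comp, Function.comp_apply,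
      MulEquiv.coe_toMonoidHom, MulAut.conj_apply, Subgroup.coe_subtype, Prod.mk.injEq]
    refine ⟨?_, trivial⟩
    rw [← hu.1, ← hu.2]
    group
  · rintro ⟨g, w⟩ ⟨v, hv⟩
    simp only [MonoidHom.prod_apply, MonoidHom.coe_comp, Function.comp_apply,
      MulEquiv.coe_toMonoidHom, MulAut.conj_apply, Subgroup.coe_subtype, Prod.mk.injEq] at hv
    have : (v : G) ∈ Subgroup.map (MulAut.conj h).toMonoidHom U := hh ▸ v.2
    obtain ⟨u, hu, hu2⟩ := this
    simp only [MulEquiv.coe_toMonoidHom, MulAut.conj_apply] at hu2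
    refine ⟨⟨u, hu⟩, ?_⟩
    simp only [MonoidHom.prod_apply, MonoidHom.coe_comp, Function.comp_apply,
      MulEquiv.coe_toMonoidHom, MulAut.conj_apply, Subgroup.coe_subtype, Prod.mk.injEq]
    constructor
    · rw [← hv.1, ← hu2]; group
    · rw [← hv.2, ← hu2]

theorem e_val_one {G : Type*} [Group G] (Sig : Finset (Subgroup G))
    (hSig : ∀ V : Subgroup G, ∃! U, U ∈ Sig ∧
      ∃ g : G, Subgroup.map (MulAut.conj g).toMonoidHom U = V)
    (V : Subgroup G) (k : G) :
    ∑ U ∈ Sig, orbSum (⟨U, U.subtype⟩ : TriE G G)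
      (⟨V, (MulAut.conj k).toMonoidHom.comp V.subtype⟩ : TriE G G) = 1 := by
  obtain ⟨U₀, ⟨hU₀, h, hh⟩, huniq⟩ := hSig V
  rw [Finset.sum_eq_single U₀]
  · rw [orbSum, if_pos (orb_diag_exists U₀ V k h hh)]
  · intro U hU hne
    rw [orbSum, if_neg]
    rintro ⟨x, hx⟩
    exact hne (huniq U ⟨hU, x.2, conj_map_snd hx⟩)
  · intro h0; exact absurd hU₀ h0

theorem shape_of_graph_conj {G : Type*} [Group G] {U : Subgroup G} {s : TriE G G} {x : G × G}
    (hx : Subgroup.map (MulAut.conj x).toMonoidHom (lhdOf (⟨U, U.subtype⟩ : TriE G G)) = lhdOf s) :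
    ∀ v (hv : v ∈ s.1), s.2 ⟨v, hv⟩ = (x.1 * x.2⁻¹) * v * (x.1 * x.2⁻¹)⁻¹ := by
  intro v hv
  have hmem : (s.2 ⟨v, hv⟩, v) ∈ lhdOf s := ⟨⟨v, hv⟩, rfl⟩
  rw [← hx] at hmem
  obtain ⟨⟨g, w⟩, hgw, heq⟩ := hmem
  obtain ⟨u, hu⟩ := hgw
  simp only [MonoidHom.prod_apply, Subgroup.coe_subtype, Prod.mk.injEq] at hu
  have hgu : g = (u : G) := hu.1 ▸ rfl
  have hwu : w = (u : G) := hu.2 ▸ rfl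
  subst hgu hwu
  have h1 : x.1 * (u : G) * x.1⁻¹ = s.2 ⟨v, hv⟩ := congrArg Prod.fst heq
  have h2 : x.2 * (u : G) * x.2⁻¹ = v := congrArg Prod.snd heq
  rw [← h1, ← h2]
  group

theorem centmap {G : Type*} [Group G] (k : G) (S : Subgroup G) :
    Subgroup.centralizer ((Subgroup.map (MulAut.conj k).toMonoidHom S : Subgroup G) : Set G)
      = Subgroup.map (MulAut.conj k).toMonoidHom (Subgroup.centralizer (S : Set G)) := by
  ext g
  simp only [Subgroup.mem_centralizer_iff, Subgroup.mem_map, SetLike.mem_coe,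
    MulEquiv.coe_toMonoidHom, MulAut.conj_apply]
  constructor
  · intro hg
    refine ⟨k⁻¹ * g * k, fun h hh => ?_, by group⟩
    have e := hg (k * h * k⁻¹) ⟨h, hh, rfl⟩
    calc h * (k⁻¹ * g * k) = k⁻¹ * ((k * h * k⁻¹) * g) * k := by group
      _ = k⁻¹ * (g * (k * h * k⁻¹)) * k := by rw [e]
      _ = (k⁻¹ * g * k) * h := by group
  · rintro ⟨c, hc, rfl⟩ y ⟨h, hh, rfl⟩
    have e := hc h hh
    calc (k * h * k⁻¹) * (k * c * k⁻¹) = k * (h * c) * k⁻¹ := by group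
      _ = k * (c * h) * k⁻¹ := by rw [e]
      _ = (k * c * k⁻¹) * (k * h * k⁻¹) := by group

theorem card_centmap {G : Type*} [Group G] (k : G) (S : Subgroup G) :
    Nat.card (Subgroup.centralizer ((Subgroup.map (MulAut.conj k).toMonoidHom S : Subgroup G) : Set G))
      = Nat.card (Subgroup.centralizer ((S : Subgroup G) : Set G)) := by
  rw [centmap]
  exact Nat.card_congr ((Subgroup.centralizer (S : Set G)).equivMapOfInjective
    _ (MulAut.conj k).injective).symm.toEquiv

theorem count_sum {G α : Type*} [Group G] [Fintype G] [Fintype α] [DecidableEq α] (F : α → ℚ) (φ : G → α)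
    (c : ℕ) (hc : 0 < c) (v : ℚ)
    (hvan : ∀ p, F p ≠ 0 → p ∈ Finset.univ.image φ)
    (hval : ∀ k, F (φ k) = (c : ℚ) / (Nat.card G : ℚ) * v)
    (hfib : ∀ b ∈ Finset.univ.image φ,
      (Finset.univ.filter (fun k => φ k = b)).card = c) :
    ∑ p : α, F p = v := by
  have hval' : ∀ k : G, F (φ k) = (c : ℚ) / (Fintype.card G : ℚ) * v := by
    simpa [Nat.card_eq_fintype_card] using hval
  have h0 : ∑ p : α, F p = ∑ p ∈ Finset.univ.image φ, F p := by
    refine (Finset.sum_subset (Finset.subset_univ _) fun p _ hp => ?_).symm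
    by_contra hF
    exact hp (hvan p hF)
  have h1 : ∑ k : G, F (φ k) = (c : ℚ) * ∑ p ∈ Finset.univ.image φ, F p := by
    rw [Finset.sum_comp F φ]
    rw [Finset.mul_sum]
    refine Finset.sum_congr rfl fun b hb => ?_
    rw [hfib b hb, nsmul_eq_mul]
  have h2 : ∑ k : G, F (φ k) = (c : ℚ) * v := by
    rw [Finset.sum_congr rfl fun k _ => hval' k, Finset.sum_const, Finset.card_univ, nsmul_eq_mul]
    have hG : (Fintype.card G : ℚ) ≠ 0 := by
      exact_mod_cast Fintype.card_ne_zero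
    field_simp
  have hcq : (c : ℚ) ≠ 0 := by exact_mod_cast hc.ne'
  have := h1.symm.trans h2
  rw [h0]
  exact mul_left_cancel₀ hcq this

end Stmt10Aux

namespace Stmt10Aux

variable {G : Type*} [Group G]

def tK (r : TriE G G) (k : G) : TriE G G :=
  ⟨r.1, ((MulAut.conj k⁻¹).toMonoidHom).comp r.2⟩

def sK (r : TriE G G) (k : G) : TriE G G :=
  ⟨(tK r k).2.range, (MulAut.conj k).toMonoidHom.comp (tK r k).2.range.subtype⟩

theorem lhd_tK (r : TriE G G) (k : G) :
    Subgroup.map (MulAut.conj ((k⁻¹ : G), (1 : G))).toMonoidHom (lhdOf r) = lhdOf (tK r k) := by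
  rw [lhd_map_conj, lhdOf]
  congr 1
  ext w
  · rfl
  · simp [tK]
    rfl

theorem conj_eq_iff (X : Subgroup G) (k k₀ : G) :
    k * k₀⁻¹ ∈ Subgroup.centralizer (X : Set G) ↔
      ∀ x ∈ X, k⁻¹ * x * k = k₀⁻¹ * x * k₀ := by
  rw [Subgroup.mem_centralizer_iff]
  constructor
  · intro h x hx
    have e := h x hx
    calc k⁻¹ * x * k = k⁻¹ * (x * (k * k₀⁻¹)) * k₀ := by group
      _ = k⁻¹ * ((k * k₀⁻¹) * x) * k₀ := by rw [e]
      _ = k₀⁻¹ * x * k₀ := by group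
  · intro h x hx
    have e := h x hx
    calc x * (k * k₀⁻¹) = k * (k⁻¹ * x * k) * k₀⁻¹ := by group
      _ = k * (k₀⁻¹ * x * k₀) * k₀⁻¹ := by rw [e]
      _ = (k * k₀⁻¹) * x := by group

theorem pair_eq_iff (r : TriE G G) (k k₀ : G) :
    (sK r k, tK r k) = (sK r k₀, tK r k₀) ↔
      k * k₀⁻¹ ∈ Subgroup.centralizer ((r.2.range : Subgroup G) : Set G) := by
  rw [conj_eq_iff]
  constructor
  · intro hp
    have ht : tK r k = tK r k₀ := congrArg Prod.snd hp
    rintro x ⟨w, rfl⟩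
    rw [tK, tK, Sigma.mk.inj_iff] at ht
    have ht2 := eq_of_heq ht.2
    have := congrFun (congrArg (fun f : ↥r.1 →* G => (f : ↥r.1 → G)) ht2) w
    simp only [MonoidHom.coe_comp, Function.comp_apply, MulEquiv.coe_toMonoidHom,
      MulAut.conj_apply] at this
    calc k⁻¹ * r.2 w * k = k⁻¹ * r.2 w * k⁻¹⁻¹ := by group
      _ = k₀⁻¹ * r.2 w * k₀⁻¹⁻¹ := this
      _ = k₀⁻¹ * r.2 w * k₀ := by group
  · intro hcen
    have ht : tK r k = tK r k₀ := by
      refine TriE.ext rfl fun w hw => ?_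
      show k⁻¹ * r.2 ⟨w, hw⟩ * k⁻¹⁻¹ = k₀⁻¹ * r.2 ⟨w, hw⟩ * k₀⁻¹⁻¹
      have := hcen (r.2 ⟨w, hw⟩) ⟨⟨w, hw⟩, rfl⟩
      calc k⁻¹ * r.2 ⟨w, hw⟩ * k⁻¹⁻¹ = k⁻¹ * r.2 ⟨w, hw⟩ * k := by group
        _ = k₀⁻¹ * r.2 ⟨w, hw⟩ * k₀ := this
        _ = k₀⁻¹ * r.2 ⟨w, hw⟩ * k₀⁻¹⁻¹ := by group
    have hs : sK r k = sK r k₀ := by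
      refine TriE.ext (congrArg (fun u : TriE G G => u.2.range) ht) fun v hv => ?_
      obtain ⟨w, rfl⟩ := hv
      show k * ((tK r k).2 w) * k⁻¹ = k₀ * ((tK r k).2 w) * k₀⁻¹
      show k * (k⁻¹ * r.2 w * k⁻¹⁻¹) * k⁻¹ = k₀ * (k⁻¹ * r.2 w * k⁻¹⁻¹) * k₀⁻¹
      have := hcen (r.2 w) ⟨w, rfl⟩
      calc k * (k⁻¹ * r.2 w * k⁻¹⁻¹) * k⁻¹ = r.2 w := by group
        _ = k₀ * (k₀⁻¹ * r.2 w * k₀) * k₀⁻¹ := by group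
        _ = k₀ * (k⁻¹ * r.2 w * k) * k₀⁻¹ := by rw [this]
        _ = k₀ * (k⁻¹ * r.2 w * k⁻¹⁻¹) * k₀⁻¹ := by group
    rw [hs, ht]

end Stmt10Aux

namespace Stmt10Aux

set_option maxHeartbeats 1000000 in
theorem side1 {G : Type*} [Group G] [Finite G] (Sig : Finset (Subgroup G))
    (hSig : ∀ V : Subgroup G, ∃! U, U ∈ Sig ∧
      ∃ g : G, Subgroup.map (MulAut.conj g).toMonoidHom U = V)
    (a : TriE G G → ℚ)
    (ha : ∀ (x : G × G) (r r' : TriE G G),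
      Subgroup.map (MulAut.conj x).toMonoidHom (lhdOf r) = lhdOf r' → a r = a r')
    (r : TriE G G) :
    ghostMul (fun r => ∑ U ∈ Sig, orbSum (⟨U, U.subtype⟩ : TriE G G) r) a r = a r := by
  haveI : Fintype G := Fintype.ofFinite G
  haveI : Fintype (TriE G G) := Fintype.ofFinite _
  simp only [ghostMul]
  set C := Subgroup.centralizer ((r.2.range : Subgroup G) : Set G) with hCdef
  have hc : 0 < Nat.card ↥C := Nat.card_pos
  set B : TriE G G → TriE G G → ℚ := fun s t =>
    if h : t.2.range = s.1 then
      (if r = ⟨t.1, s.2.comp (t.2.codRestrict s.1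
            (fun w => h ▸ MonoidHom.mem_range.mpr ⟨w, rfl⟩))⟩ then
        ((Nat.card ↥(Subgroup.centralizer ((s.1 : Subgroup G) : Set G)) : ℚ) /
          (Nat.card G : ℚ)) * (∑ U ∈ Sig, orbSum (⟨U, U.subtype⟩ : TriE G G) s) * a t
      else 0)
    else 0 with hBdef
  show ∑ᶠ (s : TriE G G), ∑ᶠ (t : TriE G G), B s t = a r
  have hφval : ∀ k : G, B (sK r k) (tK r k)
      = ((Nat.card ↥C : ℚ) / (Nat.card G : ℚ)) * a r := by
    intro k
    rw [hBdef]
    simp only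
    split_ifs with h1 h2
    · have hE : (∑ U ∈ Sig, orbSum (⟨U, U.subtype⟩ : TriE G G) (sK r k)) = 1 :=
        e_val_one Sig hSig _ k
      have hA : a (tK r k) = a r := (ha ((k⁻¹ : G), (1 : G)) r (tK r k) (lhd_tK r k)).symm
      have hc1 : (sK r k).1 = Subgroup.map (MulAut.conj k⁻¹).toMonoidHom r.2.range :=
        MonoidHom.range_comp _ _
      rw [hE, hA, hc1, card_centmap, mul_one]
    · exfalso
      apply h2
      refine TriE.ext rfl fun v hv => ?_
      show r.2 ⟨v, hv⟩ = k * (k⁻¹ * r.2 ⟨v, hv⟩ * k⁻¹⁻¹) * k⁻¹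
      group
    · exact absurd rfl h1
  have hfib : ∀ b ∈ Finset.univ.image (fun k : G => (sK r k, tK r k)),
      (Finset.univ.filter (fun k : G => (sK r k, tK r k) = b)).card = Nat.card ↥C := by
    rintro b hb
    obtain ⟨k₀, -, rfl⟩ := Finset.mem_image.mp hb
    have hiff : ∀ k : G, ((sK r k, tK r k) = (sK r k₀, tK r k₀)) ↔ k * k₀⁻¹ ∈ C :=
      fun k => pair_eq_iff r k k₀
    have : (Finset.univ.filter (fun k : G => (sK r k, tK r k) = (sK r k₀, tK r k₀))).card
        = Fintype.card {k : G // (sK r k, tK r k) = (sK r k₀, tK r k₀)} :=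
      (Fintype.card_subtype _).symm
    rw [this, ← Nat.card_eq_fintype_card]
    refine Nat.card_congr ?_
    refine ⟨fun k => ⟨k.1 * k₀⁻¹, (hiff k.1).mp k.2⟩,
      fun c => ⟨c.1 * k₀, (hiff _).mpr (by simpa [mul_assoc] using c.2)⟩, ?_, ?_⟩
    · intro k; ext; simp [mul_assoc]
    · intro c; ext; simp [mul_assoc]
  have hvan : ∀ p : TriE G G × TriE G G, B p.1 p.2 ≠ 0 →
      p ∈ Finset.univ.image (fun k : G => (sK r k, tK r k)) := by
    rintro ⟨s, t⟩ hBp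
    rw [hBdef] at hBp
    simp only at hBp
    by_cases h : t.2.range = s.1
    · rw [dif_pos h] at hBp
      by_cases hr : r = ⟨t.1, s.2.comp (t.2.codRestrict s.1
            (fun w => h ▸ MonoidHom.mem_range.mpr ⟨w, rfl⟩))⟩
      · rw [if_pos hr] at hBp
        have hes : (∑ U ∈ Sig, orbSum (⟨U, U.subtype⟩ : TriE G G) s) ≠ 0 := by
          intro h0
          rw [h0, mul_zero, zero_mul] at hBp
          exact hBp rfl
        obtain ⟨U, hU, hO⟩ := Finset.exists_ne_zero_of_sum_ne_zero hes
        have hP : ∃ x : G × G,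
            Subgroup.map (MulAut.conj x).toMonoidHom (lhdOf (⟨U, U.subtype⟩ : TriE G G))
              = lhdOf s := by
          by_contra hP
          rw [orbSum, if_neg hP] at hO
          exact hO rfl
        obtain ⟨x, hx⟩ := hP
        have hs2 := shape_of_graph_conj hx
        set k : G := x.1 * x.2⁻¹ with hkdef
        have hrfst : r.1 = t.1 := by rw [hr]
        have hrap := TriE.apply_eq hr hrfst
        refine Finset.mem_image.mpr ⟨k, Finset.mem_univ k, ?_⟩
        have htk : tK r k = t := by
          refine TriE.ext hrfst fun w hw => ?_
          have h1 : r.2 ⟨w, hw⟩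
              = s.2 ⟨t.2 ⟨w, hrfst ▸ hw⟩, h ▸ MonoidHom.mem_range.mpr ⟨⟨w, hrfst ▸ hw⟩, rfl⟩⟩ :=
            hrap w hw
          calc (tK r k).2 ⟨w, hw⟩
              = k⁻¹ * (r.2 ⟨w, hw⟩) * k⁻¹⁻¹ := rfl
            _ = k⁻¹ * (s.2 ⟨t.2 ⟨w, hrfst ▸ hw⟩,
                  h ▸ MonoidHom.mem_range.mpr ⟨⟨w, hrfst ▸ hw⟩, rfl⟩⟩) * k⁻¹⁻¹ := by rw [h1]
            _ = k⁻¹ * (k * (t.2 ⟨w, hrfst ▸ hw⟩) * k⁻¹) * k⁻¹⁻¹ := by rw [hs2]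
            _ = t.2 ⟨w, hrfst ▸ hw⟩ := by group
        have hsk : sK r k = s := by
          refine TriE.ext (((congrArg (fun u : TriE G G => u.2.range) htk)).trans h)
            fun v hv => ?_
          rw [hs2 v _]
          rfl
        show (sK r k, tK r k) = (s, t)
        rw [hsk, htk]
      · rw [if_neg hr] at hBp
        exact absurd rfl hBp
    · rw [dif_neg h] at hBp
      exact absurd rfl hBp
  calc ∑ᶠ (s : TriE G G), ∑ᶠ (t : TriE G G), B s t
      = ∑ (s : TriE G G), ∑ (t : TriE G G), B s t := by
        rw [finsum_eq_sum_of_fintype]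
        exact Finset.sum_congr rfl fun s _ => finsum_eq_sum_of_fintype _
    _ = ∑ p : TriE G G × TriE G G, B p.1 p.2 := (Fintype.sum_prod_type' (f := B)).symm
    _ = a r := by
        refine count_sum (fun p => B p.1 p.2) (fun k : G => (sK r k, tK r k))
          (Nat.card ↥C) hc (a r) hvan (fun k => hφval k) hfib

end Stmt10Aux

namespace Stmt10Aux

variable {G : Type*} [Group G]

def tK' (r : TriE G G) (k : G) : TriE G G :=
  ⟨r.1, (MulAut.conj k).toMonoidHom.comp r.1.subtype⟩

theorem mem_tK'_range {r : TriE G G} {k : G} (x : ↥((tK' r k).2.range)) :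
    (MulAut.conj k⁻¹).toMonoidHom (((tK' r k).2.range.subtype) x) ∈ r.1 := by
  obtain ⟨w, hw⟩ := MonoidHom.mem_range.mp x.2
  have : (MulAut.conj k⁻¹).toMonoidHom (((tK' r k).2.range.subtype) x) = (w : G) := by
    show k⁻¹ * (x : G) * k⁻¹⁻¹ = (w : G)
    rw [← hw]
    show k⁻¹ * (k * w * k⁻¹) * k⁻¹⁻¹ = (w : G)
    group
  rw [this]
  exact w.2

def sK' (r : TriE G G) (k : G) : TriE G G :=
  ⟨(tK' r k).2.range, r.2.comp
    (((MulAut.conj k⁻¹).toMonoidHom.comp (tK' r k).2.range.subtype).codRestrict r.1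
      (fun x => mem_tK'_range x))⟩

theorem lhd_sK' (r : TriE G G) (k : G) :
    Subgroup.map (MulAut.conj ((1 : G), k)).toMonoidHom (lhdOf r) = lhdOf (sK' r k) := by
  rw [lhd_map_conj, lhdOf]
  apply le_antisymm
  · rintro ⟨g, y⟩ ⟨w, hw⟩
    simp only [MonoidHom.prod_apply, MonoidHom.coe_comp, Function.comp_apply,
      MulEquiv.coe_toMonoidHom, MulAut.conj_apply, Subgroup.coe_subtype, Prod.mk.injEq] at hw
    have hy : y ∈ (tK' r k).2.range := by
      rw [← hw.2]
      exact ⟨w, rfl⟩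
    refine ⟨⟨y, hy⟩, ?_⟩
    simp only [MonoidHom.prod_apply, Subgroup.coe_subtype, Prod.mk.injEq]
    constructor
    · show r.2 ⟨k⁻¹ * y * k⁻¹⁻¹, _⟩ = g
      have heq : (⟨k⁻¹ * y * k⁻¹⁻¹, mem_tK'_range ⟨y, hy⟩⟩ : ↥r.1) = w := by
        apply Subtype.ext
        show k⁻¹ * y * k⁻¹⁻¹ = (w : G)
        rw [← hw.2]
        group
      rw [heq, ← hw.1]
      simp
    · trivial
  · rintro ⟨g, y⟩ ⟨v, hv⟩
    simp only [MonoidHom.prod_apply, MonoidHom.coe_comp, Function.comp_apply,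
      MulEquiv.coe_toMonoidHom, MulAut.conj_apply, Subgroup.coe_subtype, Prod.mk.injEq] at hv
    obtain ⟨w, hw⟩ := MonoidHom.mem_range.mp v.2
    refine ⟨w, ?_⟩
    simp only [MonoidHom.prod_apply, MonoidHom.coe_comp, Function.comp_apply,
      MulEquiv.coe_toMonoidHom, MulAut.conj_apply, Subgroup.coe_subtype, Prod.mk.injEq]
    have hwv : (⟨(MulAut.conj k⁻¹).toMonoidHom ((tK' r k).2.range.subtype v),
        mem_tK'_range v⟩ : ↥r.1) = w := by
      apply Subtype.ext
      show k⁻¹ * (v : G) * k⁻¹⁻¹ = (w : G)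
      rw [← hw]
      show k⁻¹ * (k * w * k⁻¹) * k⁻¹⁻¹ = (w : G)
      group
    refine Prod.ext ?_ ?_
    · rw [← hv.1]
      show 1 * (r.2 w) * 1⁻¹ = r.2 ⟨_, mem_tK'_range v⟩
      rw [hwv]
      group
    · rw [← hv.2, ← hw]
      rfl

theorem conj_eq_iff' (X : Subgroup G) (k k₀ : G) :
    k₀⁻¹ * k ∈ Subgroup.centralizer (X : Set G) ↔
      ∀ x ∈ X, k * x * k⁻¹ = k₀ * x * k₀⁻¹ := by
  rw [Subgroup.mem_centralizer_iff]
  constructor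
  · intro h x hx
    have e := h x hx
    calc k * x * k⁻¹ = k₀ * ((k₀⁻¹ * k) * x) * k⁻¹ := by group
      _ = k₀ * (x * (k₀⁻¹ * k)) * k⁻¹ := by rw [e]
      _ = k₀ * x * k₀⁻¹ := by group
  · intro h x hx
    have e := h x hx
    calc x * (k₀⁻¹ * k) = k₀⁻¹ * (k₀ * x * k₀⁻¹) * k := by group
      _ = k₀⁻¹ * (k * x * k⁻¹) * k := by rw [e]
      _ = (k₀⁻¹ * k) * x := by group

theorem pair_eq_iff' (r : TriE G G) (k k₀ : G) :
    (sK' r k, tK' r k) = (sK' r k₀, tK' r k₀) ↔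
      k₀⁻¹ * k ∈ Subgroup.centralizer ((r.1 : Subgroup G) : Set G) := by
  rw [conj_eq_iff']
  constructor
  · intro hp
    have ht : tK' r k = tK' r k₀ := congrArg Prod.snd hp
    intro x hx
    rw [tK', tK', Sigma.mk.inj_iff] at ht
    have ht2 := eq_of_heq ht.2
    have := congrFun (congrArg (fun f : ↥r.1 →* G => (f : ↥r.1 → G)) ht2) ⟨x, hx⟩
    simpa using this
  · intro hcen
    have ht : tK' r k = tK' r k₀ := by
      refine TriE.ext rfl fun w hw => ?_
      exact hcen w hw
    have hs : sK' r k = sK' r k₀ := by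
      refine TriE.ext (congrArg (fun u : TriE G G => u.2.range) ht) fun v hv => ?_
      obtain ⟨w, hwv⟩ := MonoidHom.mem_range.mp hv
      have hc := hcen w w.2
      have hmem : k⁻¹ * v * k⁻¹⁻¹ ∈ r.1 := by
        have : k⁻¹ * v * k⁻¹⁻¹ = (w : G) := by rw [← hwv]; show k⁻¹*(k*w*k⁻¹)*k⁻¹⁻¹ = (w:G); group
        rw [this]; exact w.2
      have hmem₀ : k₀⁻¹ * v * k₀⁻¹⁻¹ ∈ r.1 := by
        have : k₀⁻¹ * v * k₀⁻¹⁻¹ = (w : G) := by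
          rw [← hwv]
          show k₀⁻¹ * (k * w * k⁻¹) * k₀⁻¹⁻¹ = (w : G)
          rw [hc]; group
        rw [this]; exact w.2
      show r.2 ⟨k⁻¹ * v * k⁻¹⁻¹, hmem⟩ = r.2 ⟨k₀⁻¹ * v * k₀⁻¹⁻¹, hmem₀⟩
      refine congrArg r.2 (Subtype.ext ?_)
      show k⁻¹ * v * k⁻¹⁻¹ = k₀⁻¹ * v * k₀⁻¹⁻¹
      rw [← hwv]
      calc k⁻¹ * ((k * w * k⁻¹ : G)) * k⁻¹⁻¹ = (w : G) := by group
        _ = k₀⁻¹ * (k₀ * w * k₀⁻¹) * k₀⁻¹⁻¹ := by group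
        _ = k₀⁻¹ * (k * w * k⁻¹) * k₀⁻¹⁻¹ := by rw [hc]
    rw [hs, ht]

end Stmt10Aux

namespace Stmt10Aux

set_option maxHeartbeats 1000000 in
theorem side2 {G : Type*} [Group G] [Finite G] (Sig : Finset (Subgroup G))
    (hSig : ∀ V : Subgroup G, ∃! U, U ∈ Sig ∧
      ∃ g : G, Subgroup.map (MulAut.conj g).toMonoidHom U = V)
    (a : TriE G G → ℚ)
    (ha : ∀ (x : G × G) (r r' : TriE G G),
      Subgroup.map (MulAut.conj x).toMonoidHom (lhdOf r) = lhdOf r' → a r = a r')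
    (r : TriE G G) :
    ghostMul a (fun r => ∑ U ∈ Sig, orbSum (⟨U, U.subtype⟩ : TriE G G) r) r = a r := by
  haveI : Fintype G := Fintype.ofFinite G
  haveI : Fintype (TriE G G) := Fintype.ofFinite _
  simp only [ghostMul]
  set C := Subgroup.centralizer ((r.1 : Subgroup G) : Set G) with hCdef
  have hc : 0 < Nat.card ↥C := Nat.card_pos
  set B : TriE G G → TriE G G → ℚ := fun s t =>
    if h : t.2.range = s.1 then
      (if r = ⟨t.1, s.2.comp (t.2.codRestrict s.1
            (fun w => h ▸ MonoidHom.mem_range.mpr ⟨w, rfl⟩))⟩ then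
        ((Nat.card ↥(Subgroup.centralizer ((s.1 : Subgroup G) : Set G)) : ℚ) /
          (Nat.card G : ℚ)) * a s * (∑ U ∈ Sig, orbSum (⟨U, U.subtype⟩ : TriE G G) t)
      else 0)
    else 0 with hBdef
  show ∑ᶠ (s : TriE G G), ∑ᶠ (t : TriE G G), B s t = a r
  have hφval : ∀ k : G, B (sK' r k) (tK' r k)
      = ((Nat.card ↥C : ℚ) / (Nat.card G : ℚ)) * a r := by
    intro k
    rw [hBdef]
    simp only
    split_ifs with h1 h2
    · have hE : (∑ U ∈ Sig, orbSum (⟨U, U.subtype⟩ : TriE G G) (tK' r k)) = 1 :=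
        e_val_one Sig hSig r.1 k
      have hA : a (sK' r k) = a r := (ha ((1 : G), k) r (sK' r k) (lhd_sK' r k)).symm
      have hc1 : (sK' r k).1 = Subgroup.map (MulAut.conj k).toMonoidHom r.1 := by
        show (tK' r k).2.range = _
        rw [tK', MonoidHom.range_comp, Subgroup.range_subtype]
      rw [hE, hA, hc1, card_centmap, mul_one]
    · exfalso
      apply h2
      refine TriE.ext rfl fun v hv => ?_
      have hmem : k⁻¹ * (k * v * k⁻¹) * k⁻¹⁻¹ ∈ r.1 := by
        have hh : k⁻¹ * (k * (v : G) * k⁻¹) * k⁻¹⁻¹ = v := by group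
        rw [hh]; exact hv
      show r.2 ⟨v, hv⟩ = r.2 ⟨k⁻¹ * (k * v * k⁻¹) * k⁻¹⁻¹, hmem⟩
      refine congrArg r.2 (Subtype.ext ?_)
      show (v : G) = k⁻¹ * (k * v * k⁻¹) * k⁻¹⁻¹
      group
    · exact absurd rfl h1
  have hfib : ∀ b ∈ Finset.univ.image (fun k : G => (sK' r k, tK' r k)),
      (Finset.univ.filter (fun k : G => (sK' r k, tK' r k) = b)).card = Nat.card ↥C := by
    rintro b hb
    obtain ⟨k₀, -, rfl⟩ := Finset.mem_image.mp hb
    have hiff : ∀ k : G, ((sK' r k, tK' r k) = (sK' r k₀, tK' r k₀)) ↔ k₀⁻¹ * k ∈ C :=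
      fun k => pair_eq_iff' r k k₀
    have : (Finset.univ.filter (fun k : G => (sK' r k, tK' r k) = (sK' r k₀, tK' r k₀))).card
        = Fintype.card {k : G // (sK' r k, tK' r k) = (sK' r k₀, tK' r k₀)} :=
      (Fintype.card_subtype _).symm
    rw [this, ← Nat.card_eq_fintype_card]
    refine Nat.card_congr ?_
    refine ⟨fun k => ⟨k₀⁻¹ * k.1, (hiff k.1).mp k.2⟩,
      fun c => ⟨k₀ * c.1, (hiff _).mpr (by simpa [mul_assoc] using c.2)⟩, ?_, ?_⟩
    · intro k; ext; simp [mul_assoc]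
    · intro c; ext; simp [mul_assoc]
  have hvan : ∀ p : TriE G G × TriE G G, B p.1 p.2 ≠ 0 →
      p ∈ Finset.univ.image (fun k : G => (sK' r k, tK' r k)) := by
    rintro ⟨s, t⟩ hBp
    rw [hBdef] at hBp
    simp only at hBp
    by_cases h : t.2.range = s.1
    · rw [dif_pos h] at hBp
      by_cases hr : r = ⟨t.1, s.2.comp (t.2.codRestrict s.1
            (fun w => h ▸ MonoidHom.mem_range.mpr ⟨w, rfl⟩))⟩
      · rw [if_pos hr] at hBp
        have hes : (∑ U ∈ Sig, orbSum (⟨U, U.subtype⟩ : TriE G G) t) ≠ 0 := by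
          intro h0
          rw [h0, mul_zero] at hBp
          exact hBp rfl
        obtain ⟨U, hU, hO⟩ := Finset.exists_ne_zero_of_sum_ne_zero hes
        have hP : ∃ x : G × G,
            Subgroup.map (MulAut.conj x).toMonoidHom (lhdOf (⟨U, U.subtype⟩ : TriE G G))
              = lhdOf t := by
          by_contra hP
          rw [orbSum, if_neg hP] at hO
          exact hO rfl
        obtain ⟨x, hx⟩ := hP
        have hs2 := shape_of_graph_conj hx
        set k : G := x.1 * x.2⁻¹ with hkdef
        have hrfst : r.1 = t.1 := by rw [hr]
        have hrap := TriE.apply_eq hr hrfst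
        refine Finset.mem_image.mpr ⟨k, Finset.mem_univ k, ?_⟩
        have htk : tK' r k = t := by
          refine TriE.ext hrfst fun w hw => ?_
          exact (hs2 w (hrfst ▸ hw)).symm
        have hsk : sK' r k = s := by
          refine TriE.ext (((congrArg (fun u : TriE G G => u.2.range) htk)).trans h)
            fun v hv => ?_
          obtain ⟨w, hwv⟩ := MonoidHom.mem_range.mp hv
          have pf : k⁻¹ * v * k⁻¹⁻¹ ∈ r.1 := by
            have : k⁻¹ * v * k⁻¹⁻¹ = (w : G) := by
              rw [← hwv]
              show k⁻¹ * (k * w * k⁻¹) * k⁻¹⁻¹ = (w : G)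
              group
            rw [this]; exact w.2
          calc (sK' r k).2 ⟨v, hv⟩
              = r.2 ⟨k⁻¹ * v * k⁻¹⁻¹, pf⟩ := rfl
            _ = s.2 ⟨t.2 ⟨k⁻¹ * v * k⁻¹⁻¹, hrfst ▸ pf⟩, h ▸ MonoidHom.mem_range.mpr
                  ⟨⟨k⁻¹ * v * k⁻¹⁻¹, hrfst ▸ pf⟩, rfl⟩⟩ := hrap _ pf
            _ = s.2 ⟨v, _⟩ := by
                refine congrArg s.2 (Subtype.ext ?_)
                show t.2 ⟨k⁻¹ * v * k⁻¹⁻¹, hrfst ▸ pf⟩ = v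
                rw [hs2]
                group
        show (sK' r k, tK' r k) = (s, t)
        rw [hsk, htk]
      · rw [if_neg hr] at hBp
        exact absurd rfl hBp
    · rw [dif_neg h] at hBp
      exact absurd rfl hBp
  calc ∑ᶠ (s : TriE G G), ∑ᶠ (t : TriE G G), B s t
      = ∑ (s : TriE G G), ∑ (t : TriE G G), B s t := by
        rw [finsum_eq_sum_of_fintype]
        exact Finset.sum_congr rfl fun s _ => finsum_eq_sum_of_fintype _
    _ = ∑ p : TriE G G × TriE G G, B p.1 p.2 := (Fintype.sum_prod_type' (f := B)).symm
    _ = a r := by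
        refine count_sum (fun p => B p.1 p.2) (fun k : G => (sK' r k, tK' r k))
          (Nat.card ↥C) hc (a r) hvan (fun k => hφval k) hfib

end Stmt10Aux

/-- the orbit sums of the triples `(U, id_U, U)`, for `U` running
through a transversal of the conjugacy classes of subgroups of `G`, add up to a
two-sided identity element for the ghost product on the `G × G`-fixed elements
of `ℚA(G,G)`.  (In particular the `ℤ`-span `B̃(G,G)` of the orbit sums is a ring
— a `ℤ`-order in `ℚA(G,G)^{G×G}` — with this identity element.) -/
theorem stmt10 {G : Type*} [Group G] [Finite G] (Sig : Finset (Subgroup G))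
    (hSig : ∀ V : Subgroup G, ∃! U, U ∈ Sig ∧
      ∃ g : G, Subgroup.map (MulAut.conj g).toMonoidHom U = V)
    (a : TriE G G → ℚ)
    (ha : ∀ (x : G × G) (r r' : TriE G G),
      Subgroup.map (MulAut.conj x).toMonoidHom (lhdOf r) = lhdOf r' → a r = a r') :
    ghostMul (fun r => ∑ U ∈ Sig, orbSum (⟨U, U.subtype⟩ : TriE G G) r) a = a ∧
    ghostMul a (fun r => ∑ U ∈ Sig, orbSum (⟨U, U.subtype⟩ : TriE G G) r) = a := by
  constructor
  · funext r
    exact Stmt10Aux.side1 Sig hSig a ha r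
  · funext r
    exact Stmt10Aux.side2 Sig hSig a ha r
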